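/- There exists a bounded linear operator ϱ : ℓ¹ → c of rank at most 1 such that ‖σ − ϱ‖ ≤ 1/2; namely ϱ defined by ϱ(x)_k = (1/2) ∑_{j=1}^∞ x_j for all k ∈ ℕ satisfies ‖σ(x) − ϱ(x)‖_∞ ≤ (1/2)‖x‖₁ for every x ∈ ℓ¹. (Consequently the n-th approximation number of σ satisfies a_n(σ) ≤ 1/2 for every n ≥ 2.) -/

import Mathlib

noncomputable section

/-- The space `ℓ¹` of absolutely summable real sequences. -/
abbrev ell1 : Type := lp (fun _ : ℕ => ℝ) 1

/-- The space `ℓ^∞` of bounded real sequences with the supremum norm. -/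
abbrev ellInf : Type := lp (fun _ : ℕ => ℝ) ⊤

/-- The subspace of `ℓ^∞` consisting of convergent sequences. -/
def convSubspace : Submodule ℝ ellInf where
  carrier := {x | ∃ L : ℝ, Filter.Tendsto (fun k => x k) Filter.atTop (nhds L)}
  add_mem' := by
    rintro x y ⟨L, hL⟩ ⟨M, hM⟩
    exact ⟨L + M, by simpa [lp.coeFn_add, Pi.add_apply] using hL.add hM⟩
  zero_mem' :=
    ⟨0, by simpa [lp.coeFn_zero] using
      (tendsto_const_nhds : Filter.Tendsto (fun _ : ℕ => (0:ℝ)) _ _)⟩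
  smul_mem' := by
    rintro c x ⟨L, hL⟩
    exact ⟨c * L, by simpa [lp.coeFn_smul, Pi.smul_apply, smul_eq_mul] using hL.const_mul c⟩

/-- The space `c` of convergent real sequences, normed by the supremum norm. -/
abbrev cSpace : Type := ↥convSubspace

/-- `σ` is the summation operator: `σ(x)ₖ = ∑_{j=1}^k x_j` (`0`-indexed here). -/
def IsSummation (σ : ell1 →L[ℝ] cSpace) : Prop :=
  ∀ x : ell1, ∀ k : ℕ, (↑(σ x) : ellInf) k = ∑ j ∈ Finset.range (k + 1), x j

set_option synthInstance.maxHeartbeats 400000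

lemma ell1_summable_norm (x : ell1) : Summable fun j => ‖x j‖ := by
  have := (lp.memℓp x).summable (p := 1) (by norm_num)
  simpa using this

lemma ell1_summable (x : ell1) : Summable fun j => x j :=
  (ell1_summable_norm x).of_norm

lemma ell1_norm_eq (x : ell1) : ‖x‖ = ∑' j, ‖x j‖ := by
  have := lp.norm_eq_tsum_rpow (p := 1) (by norm_num) x
  simpa using this

/-- constant sequence as element of `cSpace` -/
def constC (c : ℝ) : cSpace :=
  ⟨⟨(fun _ => c : ∀ _ : ℕ, ℝ), memℓp_infty ⟨‖c‖, by rintro r ⟨i, rfl⟩; simp⟩⟩,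
    ⟨c, tendsto_const_nhds⟩⟩

lemma constC_apply (c : ℝ) (k : ℕ) : ((constC c : cSpace) : ellInf) k = c := rfl

lemma cSpace_smul_apply (c : ℝ) (y : cSpace) (k : ℕ) :
    ((c • y : cSpace) : ellInf) k = c * ((y : ellInf) k) := by
  rw [show ((c • y : cSpace) : ellInf) = c • (y : ellInf) from rfl, lp.coeFn_smul]
  simp

lemma cSpace_add_apply (y z : cSpace) (k : ℕ) :
    ((y + z : cSpace) : ellInf) k = (y : ellInf) k + (z : ellInf) k := by
  rw [show ((y + z : cSpace) : ellInf) = (y : ellInf) + (z : ellInf) from rfl, lp.coeFn_add]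
  simp

lemma cSpace_sub_apply (y z : cSpace) (k : ℕ) :
    ((y - z : cSpace) : ellInf) k = (y : ellInf) k - (z : ellInf) k := by
  rw [show ((y - z : cSpace) : ellInf) = (y : ellInf) - (z : ellInf) from rfl, lp.coeFn_sub]
  simp

def rhoLin : ell1 →ₗ[ℝ] cSpace where
  toFun := fun x => constC ((1 / 2) * ∑' j, x j)
  map_add' := by
    intro x y
    have h : ∑' j, (x + y) j = (∑' j, x j) + ∑' j, y j := by
      simp_rw [lp.coeFn_add, Pi.add_apply]
      exact Summable.tsum_add (ell1_summable x) (ell1_summable y)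
    apply Subtype.ext; apply Subtype.ext
    funext k
    rw [cSpace_add_apply, constC_apply, constC_apply, constC_apply, h]
    ring
  map_smul' := by
    intro c x
    have h : ∑' j, (c • x) j = c * ∑' j, x j := by
      simp_rw [lp.coeFn_smul, Pi.smul_apply, smul_eq_mul]
      exact (ell1_summable x).tsum_mul_left c
    apply Subtype.ext; apply Subtype.ext
    funext k
    rw [RingHom.id_apply, cSpace_smul_apply, constC_apply, constC_apply, h]
    ring

lemma rho_bound (x : ell1) : ‖rhoLin x‖ ≤ (1/2) * ‖x‖ := by
  show ‖constC ((1/2) * ∑' j, x j)‖ ≤ _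
  rw [Submodule.coe_norm]
  refine lp.norm_le_of_forall_le (by positivity) fun i => ?_
  rw [constC_apply, ell1_norm_eq, Real.norm_eq_abs, abs_mul, abs_of_nonneg (by norm_num : (0:ℝ) ≤ 1/2)]
  gcongr
  exact (norm_tsum_le_tsum_norm (ell1_summable_norm x)).trans_eq rfl

def rho : ell1 →L[ℝ] cSpace := LinearMap.mkContinuous rhoLin (1/2) rho_bound

lemma rho_apply (x : ell1) (k : ℕ) : ((rho x : cSpace) : ellInf) k = (1/2) * ∑' j : ℕ, x j :=
  rfl

set_option maxHeartbeats 1000000 in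
lemma key_bound (σ : ell1 →L[ℝ] cSpace) (hσ : IsSummation σ) (x : ell1) :
    ‖σ x - rho x‖ ≤ (1/2) * ‖x‖ := by
  rw [Submodule.coe_norm]
  refine lp.norm_le_of_forall_le (by positivity) fun k => ?_
  have hc : ((↑(σ x - rho x) : ellInf)) k
      = (∑ j ∈ Finset.range (k+1), x j) - (1/2) * ∑' j : ℕ, x j := by
    rw [cSpace_sub_apply, hσ x k, rho_apply]
  rw [hc, Real.norm_eq_abs]
  set A := ∑ j ∈ Finset.range (k+1), x j with hA
  set B := ∑' j : ℕ, x (j + (k+1)) with hB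
  have hT : ∑' j : ℕ, x j = A + B := (Summable.sum_add_tsum_nat_add (k+1) (ell1_summable x)).symm
  have hN : ‖x‖ = (∑ j ∈ Finset.range (k+1), ‖x j‖) + ∑' j : ℕ, ‖x (j + (k+1))‖ := by
    rw [ell1_norm_eq]
    exact (Summable.sum_add_tsum_nat_add (k+1) (ell1_summable_norm x)).symm
  have hAn : |A| ≤ ∑ j ∈ Finset.range (k+1), ‖x j‖ := by
    simpa [Real.norm_eq_abs] using Finset.abs_sum_le_sum_abs (fun j => x j) (Finset.range (k+1))
  have hBn : |B| ≤ ∑' j : ℕ, ‖x (j + (k+1))‖ := by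
    simpa [Real.norm_eq_abs] using
      norm_tsum_le_tsum_norm (f := fun j => x (j + (k+1)))
        ((summable_nat_add_iff (k+1)).2 (ell1_summable_norm x))
  have : A - (1/2) * (A + B) = (1/2) * (A - B) := by ring
  rw [hT, this, abs_mul, abs_of_nonneg (by norm_num : (0:ℝ) ≤ 1/2), hN]
  have := (abs_sub A B).trans (add_le_add hAn hBn)
  linarith [abs_sub_abs_le_abs_sub A B, abs_sub A B]


set_option maxHeartbeats 1000000 in
/-- Upper bound for the approximation numbers of the summation operator: the rank-one
operator `ϱ(x)ₖ ≡ (1/2)∑_j x_j` satisfies `‖σ(x) - ϱ(x)‖_∞ ≤ (1/2)‖x‖₁` for all `x`,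
and hence `‖σ - ϱ‖ ≤ 1/2`. -/
theorem approximation_upper_bound_summation (σ : ell1 →L[ℝ] cSpace) (hσ : IsSummation σ) :
    ∃ ϱ : ell1 →L[ℝ] cSpace,
      LinearMap.rank (ϱ : ell1 →ₗ[ℝ] cSpace) ≤ 1 ∧
      (∀ x : ell1, ∀ k : ℕ, (↑(ϱ x) : ellInf) k = (1 / 2) * ∑' j : ℕ, x j) ∧
      (∀ x : ell1, ‖σ x - ϱ x‖ ≤ (1 / 2) * ‖x‖) ∧
      ‖σ - ϱ‖ ≤ 1 / 2 := by
  refine ⟨rho, ?_, fun x k => rho_apply x k, key_bound σ hσ, ?_⟩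
  · have hr : LinearMap.range (rho : ell1 →ₗ[ℝ] cSpace)
        ≤ Submodule.span ℝ {constC 1} := by
      rintro _ ⟨x, rfl⟩
      have h : (rho x : cSpace) = ((1/2) * ∑' j : ℕ, x j) • constC 1 := by
        apply Subtype.ext; apply Subtype.ext; funext k
        rw [cSpace_smul_apply, constC_apply, rho_apply]; ring
      rw [show ((rho : ell1 →ₗ[ℝ] cSpace) x) = (rho x : cSpace) from rfl, h]
      exact Submodule.smul_mem _ _ (Submodule.mem_span_singleton_self _)
    calc LinearMap.rank (rho : ell1 →ₗ[ℝ] cSpace)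
        ≤ Module.rank ℝ (Submodule.span ℝ ({constC 1} : Set cSpace)) :=
          Submodule.rank_mono hr
      _ ≤ Cardinal.mk ({constC 1} : Set cSpace) := rank_span_le _
      _ ≤ 1 := le_of_eq (Cardinal.mk_singleton _)
  · refine ContinuousLinearMap.opNorm_le_bound _ (by norm_num) fun x => ?_
    simpa only [ContinuousLinearMap.sub_apply] using key_bound σ hσ x
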